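/- Let F be a distribution function on [0,M], m = ⌈M⌉, and ψ a given function on [0,M]. Define θ_F on [0,1] by θ_F(x) = −Σ_{i=0}^{m−1} (1−F(x+i)) ψ(x+i), and extend by θ_F(x+i) = θ_F(x+i−1) + ψ(x+i−1) for i = 1,…,m. Define φ_F(x) = F(x)θ_F(x) for x ∈ [0,1] and φ_F(x+i) − φ_F(x+i−1) = (F(x+i)−F(x+i−1))θ_F(x+i) for i = 1,…,m. Then for all x ∈ [0,M] with the relevant denominators positive, (φ_F(x+1)−φ_F(x))/(F(x+1)−F(x)) − (φ_F(x)−φ_F(x−1))/(F(x)−F(x−1)) = ψ(x). -/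

import Mathlib

/-- Lemma A.1 (solution of the score equation system): with `θ_F` defined on `[0,1]`
by `θ_F(x) = -Σ_{i=0}^{m-1} (1-F(x+i)) ψ(x+i)` and extended by
`θ_F(x+i) = θ_F(x+i-1) + ψ(x+i-1)`, and `φ_F(x) = F(x)θ_F(x)` on `[0,1]` with
`φ_F(x+i) - φ_F(x+i-1) = (F(x+i)-F(x+i-1))θ_F(x+i)`, the score equation
`(φ_F(x+1)-φ_F(x))/(F(x+1)-F(x)) - (φ_F(x)-φ_F(x-1))/(F(x)-F(x-1)) = ψ(x)` holds. -/
theorem stmt_8 (M : ℝ) (hM : 0 < M) (m : ℕ) (hm : m = ⌈M⌉₊)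
    (F ψ θ φ : ℝ → ℝ)
    (hFlo : ∀ x < (0 : ℝ), F x = 0)
    (hFhi : ∀ x : ℝ, M ≤ x → F x = 1)
    (hφlo : ∀ x < (0 : ℝ), φ x = 0)
    (hθbase : ∀ x ∈ Set.Icc (0 : ℝ) 1,
      θ x = -∑ i ∈ Finset.range m, (1 - F (x + (i : ℝ))) * ψ (x + (i : ℝ)))
    (hθrec : ∀ x ∈ Set.Icc (0 : ℝ) 1, ∀ i ∈ Finset.Icc 1 m,
      θ (x + (i : ℝ)) = θ (x + (i : ℝ) - 1) + ψ (x + (i : ℝ) - 1))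
    (hφbase : ∀ x ∈ Set.Icc (0 : ℝ) 1, φ x = F x * θ x)
    (hφrec : ∀ x ∈ Set.Icc (0 : ℝ) 1, ∀ i ∈ Finset.Icc 1 m,
      φ (x + (i : ℝ)) - φ (x + (i : ℝ) - 1)
        = (F (x + (i : ℝ)) - F (x + (i : ℝ) - 1)) * θ (x + (i : ℝ))) :
    ∀ x ∈ Set.Icc (0 : ℝ) M,
      F (x + 1) - F x > 0 → F x - F (x - 1) > 0 →
      (φ (x + 1) - φ x) / (F (x + 1) - F x)
        - (φ x - φ (x - 1)) / (F x - F (x - 1)) = ψ x := by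
  intro x hx hF1 hF2
  have hm1 : 1 ≤ m := by
    rw [hm]; exact Nat.one_le_ceil_iff.mpr hM
  have hxM : x < M := by
    by_contra h
    push_neg at h
    have h1 : F x = 1 := hFhi x h
    have h2 : F (x + 1) = 1 := hFhi _ (by linarith)
    rw [h1, h2] at hF1; linarith
  have hne1 : F (x + 1) - F x ≠ 0 := ne_of_gt hF1
  have hne2 : F x - F (x - 1) ≠ 0 := ne_of_gt hF2
  rcases lt_or_ge x 1 with hx1 | hx1
  · have hx01 : x ∈ Set.Icc (0 : ℝ) 1 := ⟨hx.1, hx1.le⟩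
    have hFm1 : F (x - 1) = 0 := hFlo _ (by linarith)
    have hφm1 : φ (x - 1) = 0 := hφlo _ (by linarith)
    have h1 : φ (x + 1) - φ x = (F (x + 1) - F x) * θ (x + 1) := by
      have := hφrec x hx01 1 (Finset.mem_Icc.mpr ⟨le_refl 1, hm1⟩)
      simpa using this
    have h2 : θ (x + 1) = θ x + ψ x := by
      have := hθrec x hx01 1 (Finset.mem_Icc.mpr ⟨le_refl 1, hm1⟩)
      simpa using this
    have h3 : φ x = F x * θ x := hφbase x hx01
    have hFx : F x ≠ 0 := by rw [hFm1] at hne2; simpa using hne2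
    rw [h1, h2, h3, hFm1, hφm1, sub_zero, sub_zero]
    field_simp
    ring
  · set n := ⌊x⌋₊ with hn
    have hn1 : 1 ≤ n := Nat.le_floor (by exact_mod_cast hx1)
    have hyx : (n : ℝ) ≤ x := Nat.floor_le hx.1
    have hy : x - (n : ℝ) ∈ Set.Icc (0 : ℝ) 1 := by
      constructor
      · linarith
      · have := Nat.lt_floor_add_one x
        linarith
    have hnm : n + 1 ≤ m := by
      rw [hm]
      exact Nat.lt_ceil.mpr (lt_of_le_of_lt hyx hxM)
    have e1 : x - (n : ℝ) + ((n : ℝ) + 1) = x + 1 := by ring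
    have e2 : x - (n : ℝ) + ((n : ℝ) + 1) - 1 = x := by ring
    have e3 : x - (n : ℝ) + (n : ℝ) = x := by ring
    have e4 : x - (n : ℝ) + (n : ℝ) - 1 = x - 1 := by ring
    have h1 : φ (x + 1) - φ x = (F (x + 1) - F x) * θ (x + 1) := by
      have := hφrec (x - (n : ℝ)) hy (n + 1)
        (Finset.mem_Icc.mpr ⟨Nat.le_add_left 1 n, hnm⟩)
      rw [show ((n + 1 : ℕ) : ℝ) = (n : ℝ) + 1 by push_cast; ring, e1,
        show x + 1 - 1 = x by ring] at this
      exact this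
    have h2 : θ (x + 1) = θ x + ψ x := by
      have := hθrec (x - (n : ℝ)) hy (n + 1)
        (Finset.mem_Icc.mpr ⟨Nat.le_add_left 1 n, hnm⟩)
      rw [show ((n + 1 : ℕ) : ℝ) = (n : ℝ) + 1 by push_cast; ring, e1,
        show x + 1 - 1 = x by ring] at this
      exact this
    have h3 : φ x - φ (x - 1) = (F x - F (x - 1)) * θ x := by
      have := hφrec (x - (n : ℝ)) hy n
        (Finset.mem_Icc.mpr ⟨hn1, le_trans (Nat.le_succ n) hnm⟩)
      rw [e3] at this
      exact this
    rw [h1, h2, h3]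
    field_simp
    ring
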